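/- For all x, y in the punctured unit disk B² \ {0} of ℂ, the triangular ratio metric satisfies s_{B²}(x,y) ≥ low(x,y) = |x−y| / min{|x − y*|, |x* − y|}, where x* = x/|x|². -/

import Mathlib

/-- Triangular ratio metric of the unit disk. -/
noncomputable def sB (x y : ℂ) : ℝ :=
  ‖x - y‖ /
    sInf ((fun z => ‖x - z‖ + ‖z - y‖) '' {z : ℂ | ‖z‖ = 1})

/-- The low-function on the punctured unit disk. -/
noncomputable def low (x y : ℂ) : ℝ :=
  ‖x - y‖ /
    min (‖x - y / (‖y‖ : ℂ) ^ 2‖)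
        (‖x / (‖x‖ : ℂ) ^ 2 - y‖)

lemma key_identity (y z : ℂ) (hy : y ≠ 0) (hz : ‖z‖ = 1) :
    ‖y‖ * ‖z - y / (‖y‖ : ℂ)^2‖ = ‖z - y‖ := by
  have hzz : z * (starRingEnd ℂ) z = 1 := by
    rw [Complex.mul_conj]; norm_cast; rw [Complex.normSq_eq_norm_sq, hz]; norm_num
  have hy' : (starRingEnd ℂ) y ≠ 0 := by simpa using hy
  have hr : ((‖y‖ : ℂ))^2 = y * (starRingEnd ℂ) y := by
    rw [Complex.mul_conj]; norm_cast; rw [Complex.normSq_eq_norm_sq]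
  have h1 : z - y / (‖y‖ : ℂ)^2 = z - 1 / (starRingEnd ℂ) y := by
    rw [hr]; field_simp
  rw [h1, ← Complex.norm_conj y, ← norm_mul]
  have h2 : (starRingEnd ℂ) y * (z - 1 / (starRingEnd ℂ) y) = (starRingEnd ℂ) y * z - 1 := by
    field_simp
  rw [h2, ← Complex.norm_conj]
  have h3 : (starRingEnd ℂ) ((starRingEnd ℂ) y * z - 1) = (starRingEnd ℂ) z * (y - z) := by
    rw [map_sub, map_mul, map_one, Complex.conj_conj]
    linear_combination hzz
  rw [h3, norm_mul, Complex.norm_conj, hz, one_mul, norm_sub_rev]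

lemma exists_circle_point (x y : ℂ) (hx : ‖x‖ < 1) (hy : ‖y‖ < 1)
    (hy0 : y ≠ 0) :
    ∃ z : ℂ, ‖z‖ = 1 ∧
      ‖x - z‖ + ‖z - y‖ ≤ ‖x - y / (‖y‖ : ℂ)^2‖ := by
  set w : ℂ := y / (‖y‖ : ℂ)^2 with hw
  have hay : (0:ℝ) < ‖y‖ := norm_pos_iff.mpr hy0
  have haw : 1 < ‖w‖ := by
    rw [hw, norm_div, norm_pow]
    simp only [Complex.norm_real, norm_norm]
    rw [lt_div_iff₀ (by positivity), one_mul, pow_two]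
    nlinarith
  set f : ℝ → ℝ := fun t => ‖x + t • (w - x)‖ with hf
  have hcont : Continuous f := continuous_norm.comp (by continuity)
  have h0 : f 0 = ‖x‖ := by simp [hf]
  have h1 : f 1 = ‖w‖ := by simp [hf]
  have hmem : (1:ℝ) ∈ Set.Icc (f 0) (f 1) := by
    rw [h0, h1]; exact ⟨le_of_lt hx, le_of_lt haw⟩
  obtain ⟨t, ht, hft⟩ := intermediate_value_Icc (by norm_num : (0:ℝ) ≤ 1) hcont.continuousOn hmem
  refine ⟨x + t • (w - x), hft, ?_⟩
  set z : ℂ := x + t • (w - x) with hz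
  have e1 : ‖x - z‖ = t * ‖w - x‖ := by
    have : x - z = (-t) • (w - x) := by rw [hz]; module
    rw [this, norm_smul]
    simp only [norm_neg, Real.norm_eq_abs, _root_.abs_of_nonneg ht.1]
  have e2 : ‖z - w‖ = (1 - t) * ‖w - x‖ := by
    have : z - w = (-(1-t)) • (w - x) := by rw [hz]; module
    rw [this, norm_smul]
    simp only [norm_neg, Real.norm_eq_abs, _root_.abs_of_nonneg (by linarith [ht.2] : (0:ℝ) ≤ 1 - t)]
  have e3 : ‖z - y‖ ≤ ‖z - w‖ := by
    have := key_identity y z hy0 hft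
    rw [hw, ← this]
    nlinarith [norm_nonneg (z - w), norm_nonneg (z - y)]
  calc ‖x - z‖ + ‖z - y‖
      ≤ ‖x - z‖ + ‖z - w‖ := by linarith
    _ = ‖w - x‖ := by rw [e1, e2]; ring
    _ = ‖x - w‖ := norm_sub_rev w x

theorem stmt_8 (x y : ℂ) (hx : ‖x‖ < 1) (hy : ‖y‖ < 1)
    (hx0 : x ≠ 0) (hy0 : y ≠ 0) :
    low x y ≤ sB x y := by
  set S : Set ℝ := (fun z => ‖x - z‖ + ‖z - y‖) '' {z : ℂ | ‖z‖ = 1} with hS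
  have hne : S.Nonempty := ⟨_, ⟨(1:ℂ), by simp, rfl⟩⟩
  have hbdd : BddBelow S := by
    refine ⟨0, fun a ⟨z, hz, hza⟩ => ?_⟩
    rw [← hza]; positivity
  have hpos : 0 < sInf S := by
    have : (1 - ‖x‖) ≤ sInf S := by
      apply le_csInf hne
      rintro a ⟨z, hz, rfl⟩
      have h1 : ‖z‖ - ‖x‖ ≤ ‖x - z‖ := by
        have := norm_sub_norm_le z x
        rwa [norm_sub_rev z x] at this
      have h2 : (0:ℝ) ≤ ‖z - y‖ := norm_nonneg _
      simp only [Set.mem_setOf_eq] at hz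
      simp only []
      linarith [h1, h2, hz.ge, hz.le]
    linarith
  have hA : sInf S ≤ ‖x - y / (‖y‖ : ℂ)^2‖ := by
    obtain ⟨z, hz, hle⟩ := exists_circle_point x y hx hy hy0
    exact le_trans (csInf_le hbdd ⟨z, hz, rfl⟩) hle
  have hB : sInf S ≤ ‖x / (‖x‖ : ℂ)^2 - y‖ := by
    obtain ⟨z, hz, hle⟩ := exists_circle_point y x hy hx hx0
    have : ‖x - z‖ + ‖z - y‖ ≤
        ‖x / (‖x‖ : ℂ)^2 - y‖ := by
      rw [norm_sub_rev x z, norm_sub_rev (x / (‖x‖ : ℂ)^2) y]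
      rw [norm_sub_rev z y]
      linarith [hle]
    exact le_trans (csInf_le hbdd ⟨z, hz, rfl⟩) this
  have hmin : sInf S ≤ min (‖x - y / (‖y‖ : ℂ) ^ 2‖)
      (‖x / (‖x‖ : ℂ) ^ 2 - y‖) := le_min hA hB
  unfold low sB
  rw [← hS]
  exact div_le_div_of_nonneg_left (norm_nonneg _) hpos hmin
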